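/- Let A be a commutative R-algebra and t ∈ A a non-zero-divisor. If the localization A_t and the quotient A/(t) are both flat as R-modules, then A is flat as an R-module. -/

import Mathlib

open TensorProduct LinearMap

lemma tensor_sq {R : Type*} [CommRing R] {X Y U V : Type*}
    [AddCommGroup X] [Module R X] [AddCommGroup Y] [Module R Y]
    [AddCommGroup U] [Module R U] [AddCommGroup V] [Module R V]
    (p : X →ₗ[R] Y) (q : U →ₗ[R] V) (v : X ⊗[R] U) :
    rTensor V p (lTensor X q v) = lTensor Y q (rTensor U p v) := by
  rw [← comp_apply, ← comp_apply, rTensor_comp_lTensor, lTensor_comp_rTensor]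

lemma aux_flat_coker {R M N N' N'' : Type*} [CommRing R]
    [AddCommGroup M] [Module R M] [AddCommGroup N] [Module R N]
    [AddCommGroup N'] [Module R N'] [AddCommGroup N''] [Module R N'']
    (f : N →ₗ[R] N') (g : N' →ₗ[R] N'') (hf : Function.Injective f)
    (hg : Function.Surjective g) (hfg : Function.Exact f g)
    [Module.Flat R N''] : Function.Injective (lTensor M f) := by
  rw [injective_iff_map_eq_zero]
  intro x hx
  let π : (M →₀ R) →ₗ[R] M := Finsupp.linearCombination R (_root_.id : M → M)
  have hπ : Function.Surjective π := fun m => ⟨Finsupp.single m 1, by simp [π]⟩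
  let S := LinearMap.ker π
  let j : S →ₗ[R] (M →₀ R) := S.subtype
  have hπj : Function.Exact j π := π.exact_subtype_ker_map
  obtain ⟨y, hy⟩ := rTensor_surjective N hπ x
  have h1 : rTensor N' π (lTensor (M →₀ R) f y) = 0 := by
    rw [tensor_sq (X := M →₀ R) π f y, hy, hx]
  obtain ⟨z, hz⟩ := (rTensor_exact (R := R) (M := ↥S) (N := (M →₀ R)) (P := M)
    (f := j) (g := π) N' hπj hπ _).mp h1
  have h3 : lTensor S g z = 0 := by
    apply Module.Flat.rTensor_preserves_injective_linearMap (M := N'') j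
      (Submodule.injective_subtype S)
    rw [map_zero, tensor_sq (X := ↥S) (Y := M →₀ R) j g z, hz, ← comp_apply, ← lTensor_comp]
    have hgf : g ∘ₗ f = 0 := by ext n; exact hfg.apply_apply_eq_zero n
    rw [hgf, lTensor_zero, LinearMap.zero_apply]
  obtain ⟨w, hw⟩ := (lTensor_exact (R := R) (M := N) (N := N') (P := N'')
    (f := f) (g := g) (↥S) hfg hg _).mp h3
  have h5 : y = rTensor N j w := by
    apply Module.Flat.lTensor_preserves_injective_linearMap (M := M →₀ R) f hf
    rw [← tensor_sq (X := ↥S) (Y := M →₀ R) j f w, hw, hz]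
  have hπjz : π ∘ₗ j = 0 := by
    ext s
    exact s.2
  rw [← hy, h5, ← rTensor_comp_apply, hπjz]
  simp

/-- Let `A` be a commutative `R`-algebra and `t ∈ A` a non-zero-divisor.
If the localization `A_t` (here: any algebra `Aloc` realizing the localization of `A` away
from `t`) and the quotient `A/(t)` are both flat as `R`-modules, then `A` is flat as an
`R`-module. -/
theorem stmt0 {R A : Type*} [CommRing R] [CommRing A] [Algebra R A]
    (t : A) (ht : ∀ x : A, t * x = 0 → x = 0)
    (Aloc : Type*) [CommRing Aloc] [Algebra A Aloc] [Algebra R Aloc]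
    [IsScalarTower R A Aloc] [IsLocalization.Away t Aloc]
    (hloc : Module.Flat R Aloc)
    (hquot : Module.Flat R (A ⧸ Ideal.span {t})) :
    Module.Flat R A := by
  haveI := hquot
  rw [Module.Flat.iff_lTensor_injective']
  intro I
  rw [injective_iff_map_eq_zero]
  intro x hx
  let φ : A →ₗ[R] Aloc := (IsScalarTower.toAlgHom R A Aloc).toLinearMap
  -- Step 1 : the image of x in Aloc ⊗ I vanishes
  have hψx : rTensor (↥I) φ x = 0 := by
    have hloci : Function.Injective (lTensor Aloc I.subtype) :=
      (Module.Flat.iff_lTensor_injective'.mp hloc) I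
    apply hloci
    rw [map_zero, ← tensor_sq (X := A) (Y := Aloc) φ I.subtype x, hx, map_zero]
  -- Step 2 : hence x is killed by a power of t
  let ψA : (A ⊗[R] (↥I)) →ₗ[A] (Aloc ⊗[R] (↥I)) :=
    { toFun := rTensor (↥I) φ
      map_add' := map_add _
      map_smul' := by
        intro a z
        induction z using TensorProduct.induction_on with
        | zero => simp
        | tmul b i =>
          simp only [smul_tmul', rTensor_tmul, RingHom.id_apply, smul_eq_mul]
          congr 1
          simp [φ, Algebra.smul_def]
        | add u v hu hv =>
          simp only [smul_add, map_add, RingHom.id_apply] at hu hv ⊢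
          rw [hu, hv] }
  have hcomp : (ψA.restrictScalars R) ∘ₗ (TensorProduct.mk R A (↥I) 1)
      = TensorProduct.mk R Aloc (↥I) 1 := by
    ext i
    show rTensor (↥I) φ ((1 : A) ⊗ₜ[R] i) = (1 : Aloc) ⊗ₜ[R] i
    simp [φ]
  have hBC : IsBaseChange Aloc ψA := by
    apply IsBaseChange.of_comp (TensorProduct.isBaseChange R (↥I) A)
    show IsBaseChange Aloc ((ψA.restrictScalars R) ∘ₗ (TensorProduct.mk R A (↥I) 1))
    rw [hcomp]
    exact TensorProduct.isBaseChange R (↥I) Aloc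
  haveI hLM : IsLocalizedModule (Submonoid.powers t) ψA :=
    (isLocalizedModule_iff_isBaseChange (Submonoid.powers t) Aloc ψA).mpr hBC
  obtain ⟨⟨s, hs⟩, hsx⟩ :=
    (IsLocalizedModule.eq_zero_iff (Submonoid.powers t) ψA).mp hψx
  obtain ⟨n, rfl⟩ := hs
  -- Step 3 : multiplication by t is injective on A ⊗ I since A/(t) is flat
  let μ : A →ₗ[R] A := LinearMap.mulLeft R t
  have hμ : Function.Injective μ := by
    intro a b hab
    have h : t * (a - b) = 0 := by
      simp only [mul_sub]
      rw [sub_eq_zero]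
      exact hab
    have := ht _ h
    rwa [sub_eq_zero] at this
  let q : A →ₗ[R] (A ⧸ Ideal.span {t}) := (Ideal.Quotient.mkₐ R (Ideal.span {t})).toLinearMap
  have hqs : Function.Surjective q := Ideal.Quotient.mkₐ_surjective R _
  have hexact : Function.Exact μ q := by
    intro y
    constructor
    · intro hy
      have : y ∈ Ideal.span {t} := by
        rwa [show q y = Ideal.Quotient.mk (Ideal.span {t}) y from rfl,
          Ideal.Quotient.eq_zero_iff_mem] at hy
      obtain ⟨c, hc⟩ := Ideal.mem_span_singleton.mp this
      exact ⟨c, by simp [μ, hc]⟩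
    · rintro ⟨a, rfl⟩
      show Ideal.Quotient.mk (Ideal.span {t}) (μ a) = 0
      rw [Ideal.Quotient.eq_zero_iff_mem]
      exact Ideal.mem_span_singleton.mpr ⟨a, rfl⟩
  have htinj : Function.Injective (lTensor (↥I) μ) :=
    aux_flat_coker μ q hμ hqs hexact
  have htinjr : Function.Injective (rTensor (↥I) μ) :=
    (lTensor_inj_iff_rTensor_inj (↥I) μ).mp htinj
  have hsmul : ∀ z : A ⊗[R] (↥I), rTensor (↥I) μ z = t • z := by
    intro z
    induction z using TensorProduct.induction_on with
    | zero => simp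
    | tmul a i => simp [μ, smul_tmul', smul_eq_mul]
    | add u v hu hv => simp only [map_add, smul_add, hu, hv]
  -- Step 4 : conclude by induction
  have key : ∀ (n : ℕ) (z : A ⊗[R] (↥I)), t ^ n • z = 0 → z = 0 := by
    intro n
    induction n with
    | zero => intro z hz; simpa using hz
    | succ n ih =>
      intro z hz
      refine ih z (htinjr ?_)
      rw [map_zero, hsmul, smul_smul, ← pow_succ']
      exact hz
  refine key n x ?_
  have : (t ^ n) • x = 0 := hsx
  exact this
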